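/- For all integers n ≥ 2 and k ≥ 1, ||R_{k,n} − C_{k,n}|| ≤ n/(4k). -/

import Mathlib

/-- Number of descents of a permutation of `{1,...,n}` (here `Fin n`, 0-indexed):
the number of positions `i` with `1 ≤ i ≤ n-1` and `π(i) > π(i+1)`. -/
def numDescents (n : ℕ) (π : Equiv.Perm (Fin n)) : ℕ :=
  ((Finset.range (n - 1)).filter (fun i =>
    ∃ h : i + 1 < n, π ⟨i + 1, h⟩ < π ⟨i, Nat.lt_of_succ_lt h⟩)).card

/-- `π` has a cyclic descent at `n` if `π(n) > π(1)`. -/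
def hasCyclicDescentAtLast (n : ℕ) (π : Equiv.Perm (Fin n)) : Prop :=
  ∃ h : 0 < n, π ⟨0, h⟩ < π ⟨n - 1, Nat.sub_lt h Nat.one_pos⟩

instance (n : ℕ) (π : Equiv.Perm (Fin n)) : Decidable (hasCyclicDescentAtLast n π) :=
  exists_prop_decidable _

/-- Number of cyclic descents: `d(π)+1` if `π` has a cyclic descent at `n`, else `d(π)`. -/
def numCyclicDescents (n : ℕ) (π : Equiv.Perm (Fin n)) : ℕ :=
  numDescents n π + if hasCyclicDescentAtLast n π then 1 else 0

/-- The k-riffle shuffle measure `R_{k,n}(π) = binom(n+k-d(π)-1, n) / k^n`. -/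
noncomputable def riffle (k n : ℕ) (π : Equiv.Perm (Fin n)) : ℝ :=
  (Nat.choose (n + k - numDescents n π - 1) n : ℝ) / (k : ℝ) ^ n

/-- The cut-then-k-riffle-shuffle measure
`C_{k,n}(π) = binom(n+k-cd(π)-1, n-1) / (n·k^(n-1))`. -/
noncomputable def cutRiffle (k n : ℕ) (π : Equiv.Perm (Fin n)) : ℝ :=
  (Nat.choose (n + k - numCyclicDescents n π - 1) (n - 1) : ℝ) / ((n : ℝ) * (k : ℝ) ^ (n - 1))

open Finset

/-- last element of Fin n -/
def lastF (n : ℕ) [NeZero n] : Fin n := ⟨n - 1, by have := NeZero.pos n; omega⟩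

/-- Cyclic descent set. -/
def dSet (n : ℕ) [NeZero n] (π : Equiv.Perm (Fin n)) : Finset (Fin n) :=
  Finset.univ.filter (fun i => π (i + 1) < π i)

lemma dSet_card_le (n : ℕ) [NeZero n] (π : Equiv.Perm (Fin n)) :
    (dSet n π).card ≤ n := by
  calc (dSet n π).card ≤ (Finset.univ : Finset (Fin n)).card := Finset.card_filter_le _ _
  _ = n := by simp

lemma mem_dSet (n : ℕ) [NeZero n] (π : Equiv.Perm (Fin n)) (i : Fin n) :
    i ∈ dSet n π ↔ π (i + 1) < π i := by
  simp [dSet]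

lemma lastF_add_one (n : ℕ) [NeZero n] : lastF n + 1 = 0 := by
  have hn := NeZero.pos n
  apply Fin.ext
  rw [Fin.add_def]
  simp only [lastF, Fin.val_one', Fin.val_zero]
  rcases Nat.lt_or_ge n 2 with h | h
  · interval_cases n
    · rfl
  · rw [Nat.mod_eq_of_lt h, Nat.sub_add_cancel (by omega), Nat.mod_self]

lemma hasCyclic_iff (n : ℕ) [NeZero n] (π : Equiv.Perm (Fin n)) :
    hasCyclicDescentAtLast n π ↔ lastF n ∈ dSet n π := by
  have hn := NeZero.pos n
  rw [mem_dSet, lastF_add_one]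
  have e0 : (0 : Fin n) = ⟨0, hn⟩ := rfl
  have e2 : lastF n = ⟨n - 1, Nat.sub_lt hn Nat.one_pos⟩ := rfl
  rw [e0, e2]
  constructor
  · rintro ⟨h0, hlt⟩; exact hlt
  · intro h; exact ⟨hn, h⟩

lemma numCyclicDescents_eq_card_dSet (n : ℕ) [NeZero n] (π : Equiv.Perm (Fin n)) :
    numCyclicDescents n π = (dSet n π).card := by
  obtain ⟨m, rfl⟩ : ∃ m, n = m + 1 := ⟨n - 1, by have := NeZero.pos n; omega⟩
  have hcard : (dSet (m+1) π).card = ∑ i : Fin (m+1), ite (π (i + 1) < π i) 1 0 := by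
    rw [dSet, Finset.card_filter]
  have hd : numDescents (m+1) π
      = ∑ i : Fin m, ite (π ((Fin.castSucc i) + 1) < π (Fin.castSucc i)) 1 0 := by
    unfold numDescents
    have h1 : (m + 1) - 1 = m := rfl
    rw [h1, Finset.card_filter, ← Fin.sum_univ_eq_sum_range]
    apply Finset.sum_congr rfl
    intro i _
    have hlt : (i : ℕ) + 1 < m + 1 := by omega
    have e1 : (Fin.castSucc i) + 1 = ⟨(i : ℕ) + 1, hlt⟩ := by
      apply Fin.ext
      simp [Fin.add_def, Nat.mod_eq_of_lt hlt]
    have e2 : (Fin.castSucc i) = ⟨(i : ℕ), by omega⟩ := rfl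
    rw [e1, e2]
    congr 1
    simp only [eq_iff_iff]
    constructor
    · rintro ⟨h, hh⟩; exact hh
    · intro h; exact ⟨hlt, h⟩
  have hc : (if hasCyclicDescentAtLast (m+1) π then 1 else 0)
      = (if π ((lastF (m+1)) + 1) < π (lastF (m+1)) then 1 else 0) := by
    by_cases h : π ((lastF (m+1)) + 1) < π (lastF (m+1))
    · rw [if_pos h, if_pos ((hasCyclic_iff (m+1) π).2 ((mem_dSet _ _ _).2 h))]
    · rw [if_neg h, if_neg (fun hh => h ((mem_dSet _ _ _).1 ((hasCyclic_iff (m+1) π).1 hh)))]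
  have hlast : lastF (m+1) = Fin.last m := rfl
  rw [numCyclicDescents, hd, hcard, Fin.sum_univ_castSucc, ← hlast]
  exact congrArg (fun z => (∑ i : Fin m,
    ite (π ((Fin.castSucc i) + 1) < π (Fin.castSucc i)) 1 0) + z) hc

lemma mul_addRight_apply {n : ℕ} [NeZero n] (π : Equiv.Perm (Fin n)) (t x : Fin n) :
    (π * Equiv.addRight t) x = π (x + t) := rfl

lemma dSet_rot (n : ℕ) [NeZero n] (π : Equiv.Perm (Fin n)) (t : Fin n) (i : Fin n) :
    i ∈ dSet n (π * Equiv.addRight t) ↔ i + t ∈ dSet n π := by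
  rw [mem_dSet, mem_dSet, mul_addRight_apply, mul_addRight_apply]
  have e : i + 1 + t = i + t + 1 := add_right_comm i 1 t
  rw [e]

lemma card_dSet_rot (n : ℕ) [NeZero n] (π : Equiv.Perm (Fin n)) (t : Fin n) :
    (dSet n (π * Equiv.addRight t)).card = (dSet n π).card := by
  rw [dSet, dSet, Finset.card_filter, Finset.card_filter]
  apply Fintype.sum_equiv (Equiv.addRight t)
  intro x
  have h1 := dSet_rot n π t x
  rw [mem_dSet, mem_dSet] at h1
  have e : (Equiv.addRight t) x = x + t := rfl
  rw [e]
  by_cases h : (π * Equiv.addRight t) (x + 1) < (π * Equiv.addRight t) x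
  · rw [if_pos h, if_pos (h1.1 h)]
  · rw [if_neg h, if_neg (fun hh => h (h1.2 hh))]

lemma cd_rot (n : ℕ) [NeZero n] (π : Equiv.Perm (Fin n)) (t : Fin n) :
    numCyclicDescents n (π * Equiv.addRight t) = numCyclicDescents n π := by
  rw [numCyclicDescents_eq_card_dSet, numCyclicDescents_eq_card_dSet, card_dSet_rot]

lemma hasCyclic_rot (n : ℕ) [NeZero n] (π : Equiv.Perm (Fin n)) (t : Fin n) :
    hasCyclicDescentAtLast n (π * Equiv.addRight t) ↔ lastF n + t ∈ dSet n π := by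
  rw [hasCyclic_iff, dSet_rot]

lemma d_rot (n : ℕ) [NeZero n] (π : Equiv.Perm (Fin n)) (t : Fin n) :
    numDescents n (π * Equiv.addRight t)
      = (dSet n π).card - (if lastF n + t ∈ dSet n π then 1 else 0) := by
  have h1 : numCyclicDescents n (π * Equiv.addRight t) = numCyclicDescents n π :=
    cd_rot n π t
  rw [numCyclicDescents] at h1
  rw [numCyclicDescents_eq_card_dSet] at h1
  by_cases h : lastF n + t ∈ dSet n π
  · rw [if_pos h]
    rw [if_pos ((hasCyclic_rot n π t).2 h)] at h1
    omega
  · rw [if_neg h]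
    rw [if_neg (fun hh => h ((hasCyclic_rot n π t).1 hh))] at h1
    omega

lemma card_filter_cyclic (n : ℕ) [NeZero n] (π : Equiv.Perm (Fin n)) :
    (Finset.univ.filter (fun t : Fin n => lastF n + t ∈ dSet n π)).card
      = (dSet n π).card := by
  rw [Finset.card_filter]
  conv_rhs => rw [dSet, Finset.card_filter]
  apply Fintype.sum_equiv (Equiv.addLeft (lastF n))
  intro t
  have e : (Equiv.addLeft (lastF n)) t = lastF n + t := rfl
  rw [e]
  by_cases h : lastF n + t ∈ dSet n π
  · rw [if_pos h, if_pos ((mem_dSet n π _).1 h)]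
  · rw [if_neg h, if_neg (fun hh => h ((mem_dSet n π _).2 hh))]

lemma hasCyclic_mem (n : ℕ) [NeZero n] (π : Equiv.Perm (Fin n))
    (h : hasCyclicDescentAtLast n π) : 1 ≤ (dSet n π).card := by
  rw [hasCyclic_iff] at h
  exact Finset.card_pos.2 ⟨lastF n, h⟩

lemma cd_le (n : ℕ) [NeZero n] (π : Equiv.Perm (Fin n)) : numCyclicDescents n π ≤ n := by
  rw [numCyclicDescents_eq_card_dSet]; exact dSet_card_le n π

lemma I1 (n k c : ℕ) (hn : 2 ≤ n) (hk : 1 ≤ k) (hcn : c ≤ n) :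
    c * Nat.choose (n+k-c) n + (n - c) * Nat.choose (n+k-c-1) n
      = k * Nat.choose (n+k-c-1) (n-1) := by
  rcases le_or_gt c k with h | h
  · have hM1 : n + k - c = (n + k - c - 1) + 1 := by omega
    set M := n + k - c - 1 with hM
    have pascal : Nat.choose (M+1) n = Nat.choose M (n-1) + Nat.choose M n := by
      have h3 := Nat.choose_succ_succ' M (n-1)
      rwa [(by omega : n - 1 + 1 = n)] at h3
    have h2 : Nat.choose M n * n = Nat.choose M (n-1) * (M - (n-1)) := by
      have h4 := Nat.choose_succ_right_eq M (n-1)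
      rwa [(by omega : n - 1 + 1 = n)] at h4
    have hMn : M - (n-1) = k - c := by omega
    rw [hMn] at h2
    rw [hM1, pascal]
    set x := Nat.choose M (n-1); set y := Nat.choose M n
    zify [hcn, h] at h2 ⊢
    linear_combination h2
  · have z1 : Nat.choose (n+k-c) n = 0 := Nat.choose_eq_zero_of_lt (by omega)
    have z2 : Nat.choose (n+k-c-1) n = 0 := Nat.choose_eq_zero_of_lt (by omega)
    have z3 : Nat.choose (n+k-c-1) (n-1) = 0 := Nat.choose_eq_zero_of_lt (by omega)
    rw [z1, z2, z3]; ring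

lemma I2 (n k c : ℕ) (hn : 2 ≤ n) (hk : 1 ≤ k) (hcn : c ≤ n) (hc1 : 1 ≤ c) :
    (n : ℕ) * Nat.choose (n+k-c) n = (n+k-c) * Nat.choose (n+k-c-1) (n-1) := by
  have hM1 : n + k - c = (n + k - c - 1) + 1 := by omega
  set M := n + k - c - 1 with hM
  rw [hM1]
  have h4 := Nat.add_one_mul_choose_eq M (n-1)
  rw [(by omega : n - 1 + 1 = n)] at h4
  linarith [h4]

lemma I3 (n k c : ℕ) (hn : 2 ≤ n) (hk : 1 ≤ k) (hcn : c ≤ n) (hck : c ≤ k) :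
    n * Nat.choose (n+k-c-1) n = (k - c) * Nat.choose (n+k-c-1) (n-1) := by
  have h4 := Nat.choose_succ_right_eq (n+k-c-1) (n-1)
  rw [(by omega : n - 1 + 1 = n), (by omega : n + k - c - 1 - (n-1) = k - c)] at h4
  linarith [h4]

lemma cutRiffle_nonneg (k n : ℕ) (π : Equiv.Perm (Fin n)) : 0 ≤ cutRiffle k n π := by
  unfold cutRiffle; positivity

lemma abs_diff_eq (n k : ℕ) (hn : 2 ≤ n) (hk : 1 ≤ k) (π : Equiv.Perm (Fin n)) :
    |riffle k n π - cutRiffle k n π|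
      = cutRiffle k n π *
        (if hasCyclicDescentAtLast n π then ((n : ℝ) - numCyclicDescents n π)
         else (numCyclicDescents n π : ℝ)) / k := by
  haveI : NeZero n := ⟨by omega⟩
  have hkR : (0:ℝ) < (k:ℝ) := by exact_mod_cast hk
  have hnR : (0:ℝ) < (n:ℝ) := by positivity
  have hK : (0:ℝ) < (k:ℝ)^(n-1) := by positivity
  have hkn : ((k:ℝ))^n = (k:ℝ)^(n-1) * k := by
    rw [← pow_succ, (by omega : n - 1 + 1 = n)]
  set c := numCyclicDescents n π with hc
  have hcn : c ≤ n := cd_le n π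
  have hcnR : (c : ℝ) ≤ (n : ℝ) := by exact_mod_cast hcn
  by_cases hcy : hasCyclicDescentAtLast n π
  · rw [if_pos hcy]
    have hc1 : 1 ≤ c := by
      rw [hc, numCyclicDescents_eq_card_dSet]
      exact hasCyclic_mem n π hcy
    have hd : numDescents n π = c - 1 := by
      rw [hc, numCyclicDescents, if_pos hcy]; omega
    have htop : n + k - numDescents n π - 1 = n + k - c := by
      rw [hd]; omega
    have key : riffle k n π - cutRiffle k n π
        = cutRiffle k n π * ((n : ℝ) - c) / k := by
      unfold riffle cutRiffle
      rw [htop, ← hc]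
      have hAR : (n : ℝ) * (Nat.choose (n+k-c) n : ℝ)
          = ((n+k-c : ℕ) : ℝ) * (Nat.choose (n+k-c-1) (n-1) : ℝ) := by
        exact_mod_cast I2 n k c hn hk hcn hc1
      set X := (Nat.choose (n+k-c) n : ℝ) with hX
      set Y := (Nat.choose (n+k-c-1) (n-1) : ℝ) with hY
      have h5 : ((n+k-c : ℕ) : ℝ) = (n : ℝ) + k - c := by
        push_cast [(by omega : c ≤ n + k)]; ring
      rw [h5] at hAR
      have hXe : X = ((n : ℝ) + k - c) * Y / n := by
        field_simp
        linarith [hAR]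
      rw [hkn, hXe]
      field_simp
      ring
    rw [key, abs_of_nonneg]
    apply div_nonneg _ (le_of_lt hkR)
    exact mul_nonneg (cutRiffle_nonneg k n π) (by linarith)
  · rw [if_neg hcy]
    have hd : numDescents n π = c := by
      rw [hc, numCyclicDescents, if_neg hcy]; omega
    have htop : n + k - numDescents n π - 1 = n + k - c - 1 := by rw [hd]
    have key : riffle k n π - cutRiffle k n π
        = -(cutRiffle k n π * (c : ℝ) / k) := by
      unfold riffle cutRiffle
      rw [htop, ← hc]
      rcases le_or_gt c k with hck | hck
      · have hAR : (n : ℝ) * (Nat.choose (n+k-c-1) n : ℝ)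
            = ((k-c : ℕ) : ℝ) * (Nat.choose (n+k-c-1) (n-1) : ℝ) := by
          exact_mod_cast I3 n k c hn hk hcn hck
        set X := (Nat.choose (n+k-c-1) n : ℝ) with hX
        set Y := (Nat.choose (n+k-c-1) (n-1) : ℝ) with hY
        have h5 : ((k-c : ℕ) : ℝ) = (k : ℝ) - c := by
          push_cast [hck]; ring
        rw [h5] at hAR
        have hXe : X = ((k : ℝ) - c) * Y / n := by
          field_simp
          linarith [hAR]
        rw [hkn, hXe]
        field_simp
        ring
      · have z1 : Nat.choose (n+k-c-1) n = 0 := Nat.choose_eq_zero_of_lt (by omega)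
        have z2 : Nat.choose (n+k-c-1) (n-1) = 0 := Nat.choose_eq_zero_of_lt (by omega)
        rw [z1, z2]
        simp
    have hle : riffle k n π - cutRiffle k n π ≤ 0 := by
      rw [key]
      simp only [neg_nonpos]
      apply div_nonneg _ (le_of_lt hkR)
      exact mul_nonneg (cutRiffle_nonneg k n π) (by positivity)
    rw [abs_of_nonpos hle, key]
    ring

lemma numDescents_le (n : ℕ) (π : Equiv.Perm (Fin n)) : numDescents n π ≤ n - 1 := by
  unfold numDescents
  calc _ ≤ (Finset.range (n-1)).card := Finset.card_filter_le _ _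
  _ = n - 1 := Finset.card_range _

lemma sm_gap {N : ℕ} {f : Fin N → ℕ} (hf : StrictMono f) :
    ∀ (d : ℕ) (i j : Fin N), (i:ℕ) ≤ (j:ℕ) → (j:ℕ) - (i:ℕ) = d → f i + d ≤ f j := by
  intro d
  induction d with
  | zero =>
    intro i j hij hd
    have h1 : i ≤ j := by rwa [Fin.le_def]
    have h2 := hf.monotone h1
    omega
  | succ e IH =>
    intro i j hij hd
    have hjN : (j:ℕ) - 1 < N := by omega
    have h2 := IH i ⟨(j:ℕ) - 1, hjN⟩ (by simp; omega) (by simp; omega)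
    have h3 : (⟨(j:ℕ) - 1, hjN⟩ : Fin N) < j := by
      rw [Fin.lt_def]; simp; omega
    have h4 := hf h3
    omega

def descAtP (n : ℕ) (π : Equiv.Perm (Fin n)) (j : ℕ) : Prop :=
  ∃ h : j + 1 < n, π ⟨j + 1, h⟩ < π ⟨j, Nat.lt_of_succ_lt h⟩

instance descAtP_dec (n : ℕ) (π : Equiv.Perm (Fin n)) (j : ℕ) : Decidable (descAtP n π j) :=
  exists_prop_decidable _

def dB (n : ℕ) (π : Equiv.Perm (Fin n)) (i : ℕ) : ℕ :=
  ((Finset.range i).filter (descAtP n π)).card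

lemma numDescents_eq_dB (n : ℕ) (π : Equiv.Perm (Fin n)) :
    numDescents n π = dB n π (n - 1) := rfl

lemma dB_le (n : ℕ) (π : Equiv.Perm (Fin n)) (i : ℕ) : dB n π i ≤ i :=
  le_trans (Finset.card_filter_le _ _) (le_of_eq (Finset.card_range i))

lemma dB_mono (n : ℕ) (π : Equiv.Perm (Fin n)) {i j : ℕ} (h : i ≤ j) :
    dB n π i ≤ dB n π j :=
  Finset.card_le_card (Finset.filter_subset_filter _ (Finset.range_subset_range.2 h))

lemma dB_succ (n : ℕ) (π : Equiv.Perm (Fin n)) (i : ℕ) :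
    dB n π (i+1) = dB n π i + (if descAtP n π i then 1 else 0) := by
  unfold dB
  rw [Finset.range_add_one, Finset.filter_insert]
  by_cases h : descAtP n π i
  · rw [if_pos h, if_pos h, Finset.card_insert_of_notMem (by simp)]
  · rw [if_neg h, if_neg h, Nat.add_zero]

/-- the word built from a permutation and an `n`-subset -/
noncomputable def gW (n k : ℕ) (π : Equiv.Perm (Fin n))
    (S : Finset (Fin (n + k - numDescents n π - 1))) (hS : S.card = n) (i : Fin n) : ℕ :=
  ((S.orderEmbOfFin hS i : Fin (n + k - numDescents n π - 1)) : ℕ) - ((i : ℕ) - dB n π (i : ℕ))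

set_option maxHeartbeats 1000000 in
lemma gW_lt (n k : ℕ) (hn : 2 ≤ n) (hk : 1 ≤ k) (π : Equiv.Perm (Fin n))
    (S : Finset (Fin (n + k - numDescents n π - 1))) (hS : S.card = n) (i : Fin n) :
    gW n k π S hS i < k := by
  have hH : StrictMono (fun j : Fin n => ((S.orderEmbOfFin hS j : Fin _) : ℕ)) :=
    Fin.val_strictMono.comp (S.orderEmbOfFin hS).strictMono
  have hd : numDescents n π ≤ n - 1 := numDescents_le n π
  have hlastlt : n - 1 < n := by omega
  have hilt : (i : ℕ) < n := i.isLt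
  have hF2 := sm_gap hH (i : ℕ) ⟨0, by omega⟩ i (by simp) (by simp)
  have hF3 := sm_gap hH ((n-1) - (i:ℕ)) i ⟨n-1, hlastlt⟩ (by simp; omega) (by simp)
  have hH2 : ((S.orderEmbOfFin hS ⟨n-1, hlastlt⟩ : Fin _) : ℕ) < n + k - numDescents n π - 1 :=
    (S.orderEmbOfFin hS ⟨n-1, hlastlt⟩).isLt
  have hdBi : dB n π (i : ℕ) ≤ numDescents n π := by
    rw [numDescents_eq_dB]; exact dB_mono n π (by omega)
  have hdB2 := dB_le n π (i : ℕ)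
  unfold gW
  omega

set_option maxHeartbeats 1000000 in
lemma key_strictMono (n k : ℕ) (hn : 2 ≤ n) (hk : 1 ≤ k) (π : Equiv.Perm (Fin n))
    (S : Finset (Fin (n + k - numDescents n π - 1))) (hS : S.card = n) :
    StrictMono (fun i : Fin n => toLex ((gW n k π S hS i : ℕ), π i)) := by
  obtain ⟨m, rfl⟩ : ∃ m, n = m + 1 := ⟨n - 1, by omega⟩
  rw [Fin.strictMono_iff_lt_succ]
  intro i
  have hH : StrictMono (fun j : Fin (m+1) => ((S.orderEmbOfFin hS j : Fin _) : ℕ)) :=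
    Fin.val_strictMono.comp (S.orderEmbOfFin hS).strictMono
  have hstep : ((S.orderEmbOfFin hS i.castSucc : Fin _) : ℕ)
      < ((S.orderEmbOfFin hS i.succ : Fin _) : ℕ) := hH (Fin.castSucc_lt_succ (i := i))
  have hcv : ((i.castSucc : Fin (m+1)) : ℕ) = (i : ℕ) := rfl
  have hsv : ((i.succ : Fin (m+1)) : ℕ) = (i : ℕ) + 1 := rfl
  have hdBs := dB_succ (m+1) π (i : ℕ)
  have hdB2 := dB_le (m+1) π (i : ℕ)
  -- lower bounds: a ≤ H at castSucc
  have hF2 := sm_gap hH ((i:ℕ)) ⟨0, by omega⟩ i.castSucc (by simp) (by simp)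
  rw [Prod.Lex.lt_iff]
  by_cases hdesc : descAtP (m+1) π (i : ℕ)
  · left
    unfold gW
    rw [hcv, hsv, hdBs, if_pos hdesc]
    simp only [ofLex_toLex]
    omega
  · have hle : gW (m+1) k π S hS i.castSucc ≤ gW (m+1) k π S hS i.succ := by
      unfold gW
      rw [hcv, hsv, hdBs, if_neg hdesc]
      omega
    have hpi : π i.castSucc < π i.succ := by
      have h1 : ¬ π i.succ < π i.castSucc := by
        intro hlt
        apply hdesc
        refine ⟨by omega, ?_⟩
        have e1 : (⟨(i:ℕ) + 1, by omega⟩ : Fin (m+1)) = i.succ := by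
          apply Fin.ext; simp
        have e2 : (⟨(i:ℕ), by omega⟩ : Fin (m+1)) = i.castSucc := by
          apply Fin.ext; simp
        rw [e1, e2]
        exact hlt
      have h2 : π i.castSucc ≠ π i.succ := by
        intro he
        have := π.injective he
        have : (i.castSucc : ℕ) = (i.succ : ℕ) := by rw [this]
        omega
      rcases lt_or_ge (π i.castSucc) (π i.succ) with h | h
      · exact h
      · exact absurd (lt_of_le_of_ne h (fun he => h2 he.symm)) h1
    rcases lt_or_eq_of_le hle with h | h
    · left; exact h
    · right; exact ⟨h, hpi⟩

set_option maxHeartbeats 1000000 in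
lemma worpitzky_le' (n k : ℕ) (hn : 2 ≤ n) (hk : 1 ≤ k) :
    ∑ π : Equiv.Perm (Fin n), Nat.choose (n + k - numDescents n π - 1) n ≤ k ^ n := by
  classical
  have hcard : ∀ π : Equiv.Perm (Fin n),
      Nat.choose (n + k - numDescents n π - 1) n
        = Fintype.card {S : Finset (Fin (n + k - numDescents n π - 1)) // S.card = n} := by
    intro π
    rw [Fintype.card_finset_len, Fintype.card_fin]
  rw [Finset.sum_congr rfl (fun π _ => hcard π), ← Fintype.card_sigma]
  have hinj : Function.Injective
      (fun (x : (π : Equiv.Perm (Fin n)) ×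
          {S : Finset (Fin (n + k - numDescents n π - 1)) // S.card = n}) =>
        (fun j : Fin n => (⟨gW n k x.1 x.2.1 x.2.2 (x.1.symm j),
          gW_lt n k hn hk x.1 x.2.1 x.2.2 (x.1.symm j)⟩ : Fin k))) := by
    rintro ⟨π, S, hS⟩ ⟨π', S', hS'⟩ hEq
    simp only [] at hEq
    -- pointwise value equality
    have hval : ∀ j : Fin n, gW n k π S hS (π.symm j) = gW n k π' S' hS' (π'.symm j) := by
      intro j
      have := congrFun hEq j
      exact congrArg Fin.val this
    -- the common key function
    set keyf : Fin n → ℕ ×ₗ Fin n :=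
      fun j => toLex (gW n k π S hS (π.symm j), j) with hkeyf
    have hkey1 : (fun i : Fin n => toLex ((gW n k π S hS i : ℕ), π i)) = keyf ∘ π := by
      funext i
      simp only [hkeyf, Function.comp_apply, Equiv.symm_apply_apply]
    have hkey2 : (fun i : Fin n => toLex ((gW n k π' S' hS' i : ℕ), π' i)) = keyf ∘ π' := by
      funext i
      simp only [hkeyf, Function.comp_apply, Equiv.symm_apply_apply, hval (π' i)]
    have hsm1 : StrictMono (keyf ∘ π) := by
      rw [← hkey1]; exact key_strictMono n k hn hk π S hS
    have hsm2 : StrictMono (keyf ∘ π') := by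
      rw [← hkey2]; exact key_strictMono n k hn hk π' S' hS'
    have hkeyinj : Function.Injective keyf := by
      intro a b hab
      have := congrArg (fun z => (ofLex z).2) hab
      exact this
    set T : Finset (ℕ ×ₗ Fin n) := Finset.univ.image keyf with hT
    have hTcard : T.card = n := by
      rw [hT, Finset.card_image_of_injective _ hkeyinj, Finset.card_univ, Fintype.card_fin]
    have he1 : keyf ∘ π = T.orderEmbOfFin hTcard := by
      apply Finset.orderEmbOfFin_unique hTcard _ hsm1
      intro x
      exact Finset.mem_image_of_mem _ (Finset.mem_univ _)
    have he2 : keyf ∘ π' = T.orderEmbOfFin hTcard := by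
      apply Finset.orderEmbOfFin_unique hTcard _ hsm2
      intro x
      exact Finset.mem_image_of_mem _ (Finset.mem_univ _)
    have hππ' : π = π' := by
      apply Equiv.ext
      intro i
      have h3 : keyf (π i) = keyf (π' i) := by
        rw [show keyf (π i) = (keyf ∘ π) i from rfl, show keyf (π' i) = (keyf ∘ π') i from rfl,
          he1, he2]
      exact hkeyinj h3
    subst hππ'
    -- now S = S'
    have hg : ∀ i : Fin n, gW n k π S hS i = gW n k π S' hS' i := by
      intro i
      have := hval (π i)
      rwa [Equiv.symm_apply_apply] at this
    have hH : ∀ i : Fin n, ((S.orderEmbOfFin hS i : Fin _) : ℕ)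
        = ((S'.orderEmbOfFin hS' i : Fin _) : ℕ) := by
      intro i
      have h1 := hg i
      unfold gW at h1
      have hsm : StrictMono (fun j : Fin n => ((S.orderEmbOfFin hS j : Fin _) : ℕ)) :=
        Fin.val_strictMono.comp (S.orderEmbOfFin hS).strictMono
      have hsm' : StrictMono (fun j : Fin n => ((S'.orderEmbOfFin hS' j : Fin _) : ℕ)) :=
        Fin.val_strictMono.comp (S'.orderEmbOfFin hS').strictMono
      have hF2 := sm_gap hsm (i : ℕ) ⟨0, by omega⟩ i (by simp) (by simp)
      have hF2' := sm_gap hsm' (i : ℕ) ⟨0, by omega⟩ i (by simp) (by simp)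
      have hdB2 := dB_le n π (i : ℕ)
      omega
    have hSS' : S = S' := by
      apply Finset.coe_injective
      have hemb : ⇑(S.orderEmbOfFin hS) = ⇑(S'.orderEmbOfFin hS') :=
        funext fun i => Fin.ext (hH i)
      rw [← Finset.range_orderEmbOfFin S hS, ← Finset.range_orderEmbOfFin S' hS', hemb]
    subst hSS'
    rfl
  have hle := Fintype.card_le_of_injective _ hinj
  rwa [Fintype.card_fun, Fintype.card_fin, Fintype.card_fin] at hle

lemma orbit_riffle_sum (n k : ℕ) (hn : 2 ≤ n) (hk : 1 ≤ k) [NeZero n]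
    (π : Equiv.Perm (Fin n)) :
    ∑ t : Fin n, riffle k n (π * Equiv.addRight t) = n * cutRiffle k n π := by
  have hkR : (0:ℝ) < (k:ℝ) := by exact_mod_cast hk
  have hnR : (0:ℝ) < (n:ℝ) := by positivity
  have hK : (0:ℝ) < (k:ℝ)^(n-1) := by positivity
  have hkn : ((k:ℝ))^n = (k:ℝ)^(n-1) * k := by
    rw [← pow_succ, (by omega : n - 1 + 1 = n)]
  set c := (dSet n π).card with hc
  have hcn : c ≤ n := dSet_card_le n π
  have hterm : ∀ t : Fin n, riffle k n (π * Equiv.addRight t)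
      = if lastF n + t ∈ dSet n π then ((Nat.choose (n+k-c) n : ℝ)/(k:ℝ)^n)
        else ((Nat.choose (n+k-c-1) n : ℝ)/(k:ℝ)^n) := by
    intro t
    unfold riffle
    rw [d_rot n π t, ← hc]
    by_cases hb : lastF n + t ∈ dSet n π
    · have hc1 : 1 ≤ c := Finset.card_pos.2 ⟨_, hb⟩
      rw [if_pos hb, if_pos hb, (by omega : n + k - (c - 1) - 1 = n + k - c)]
    · rw [if_neg hb, if_neg hb, (by omega : n + k - (c - 0) - 1 = n + k - c - 1)]
  rw [Finset.sum_congr rfl (fun t _ => hterm t), Finset.sum_ite, Finset.sum_const,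
    Finset.sum_const]
  have hcard1 : (Finset.univ.filter (fun t : Fin n => lastF n + t ∈ dSet n π)).card = c :=
    card_filter_cyclic n π
  have hcard2 : (Finset.univ.filter (fun t : Fin n => ¬ (lastF n + t ∈ dSet n π))).card
      = n - c := by
    have h6 := Finset.card_filter_add_card_filter_not
      (s := (Finset.univ : Finset (Fin n)))
      (p := fun t : Fin n => lastF n + t ∈ dSet n π)
    rw [hcard1] at h6
    simp only [Finset.card_univ, Fintype.card_fin] at h6
    omega
  rw [hcard1, hcard2, nsmul_eq_mul, nsmul_eq_mul]
  have hsub : ((n - c : ℕ):ℝ) = (n:ℝ) - c := by push_cast [hcn]; ring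
  have hI : (c:ℝ) * (Nat.choose (n+k-c) n : ℝ)
      + ((n:ℝ) - c) * (Nat.choose (n+k-c-1) n : ℝ)
      = (k:ℝ) * (Nat.choose (n+k-c-1) (n-1) : ℝ) := by
    rw [← hsub]
    exact_mod_cast I1 n k c hn hk hcn
  unfold cutRiffle
  rw [numCyclicDescents_eq_card_dSet, ← hc, hsub, hkn]
  rw [← mul_div_assoc, ← mul_div_assoc, ← mul_div_assoc, ← add_div, hI,
    div_eq_div_iff (by positivity) (by positivity)]
  ring

lemma worpitzky_le (n k : ℕ) (hn : 2 ≤ n) (hk : 1 ≤ k) :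
    ∑ π : Equiv.Perm (Fin n), Nat.choose (n + k - numDescents n π - 1) n ≤ k ^ n :=
  worpitzky_le' n k hn hk

theorem totalVariation_riffle_cutRiffle_le (n k : ℕ) (hn : 2 ≤ n) (hk : 1 ≤ k) :
    (1 / 2) * ∑ π : Equiv.Perm (Fin n), |riffle k n π - cutRiffle k n π|
      ≤ (n : ℝ) / (4 * (k : ℝ)) := by
  haveI : NeZero n := ⟨by omega⟩
  have hkR : (0:ℝ) < (k:ℝ) := by exact_mod_cast hk
  have hnR : (0:ℝ) < (n:ℝ) := by positivity
  set Cw : Equiv.Perm (Fin n) → ℝ := fun π => cutRiffle k n π *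
    (if hasCyclicDescentAtLast n π then ((n : ℝ) - numCyclicDescents n π)
     else (numCyclicDescents n π : ℝ)) with hCw
  -- Step A
  have stepA : ∑ π : Equiv.Perm (Fin n), |riffle k n π - cutRiffle k n π|
      = (∑ π : Equiv.Perm (Fin n), Cw π) / k := by
    rw [Finset.sum_div]
    exact Finset.sum_congr rfl (fun π _ => abs_diff_eq n k hn hk π)
  -- constancy of cutRiffle on orbits
  have hCrot : ∀ (π : Equiv.Perm (Fin n)) (t : Fin n),
      cutRiffle k n (π * Equiv.addRight t) = cutRiffle k n π := by
    intro π t; unfold cutRiffle; rw [cd_rot]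
  -- Step B
  have stepB : ∀ π : Equiv.Perm (Fin n),
      ∑ t : Fin n, Cw (π * Equiv.addRight t) ≤ ((n:ℝ)^2/2) * cutRiffle k n π := by
    intro π
    set c := (dSet n π).card with hc
    have hcn : c ≤ n := dSet_card_le n π
    have hterm : ∀ t : Fin n, Cw (π * Equiv.addRight t)
        = if lastF n + t ∈ dSet n π then cutRiffle k n π * ((n : ℝ) - c)
          else cutRiffle k n π * (c : ℝ) := by
      intro t
      show cutRiffle k n (π * Equiv.addRight t) *
          (if hasCyclicDescentAtLast n (π * Equiv.addRight t)
            then ((n : ℝ) - numCyclicDescents n (π * Equiv.addRight t))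
            else (numCyclicDescents n (π * Equiv.addRight t) : ℝ)) = _
      rw [hCrot π t, cd_rot n π t, numCyclicDescents_eq_card_dSet, ← hc]
      by_cases hb : lastF n + t ∈ dSet n π
      · rw [if_pos ((hasCyclic_rot n π t).2 hb), if_pos hb]
      · rw [if_neg (fun hh => hb ((hasCyclic_rot n π t).1 hh)), if_neg hb]
    rw [Finset.sum_congr rfl (fun t _ => hterm t), Finset.sum_ite, Finset.sum_const,
      Finset.sum_const, card_filter_cyclic n π]
    have hcard2 : (Finset.univ.filter (fun t : Fin n => ¬ (lastF n + t ∈ dSet n π))).card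
        = n - c := by
      have h6 := Finset.card_filter_add_card_filter_not
        (s := (Finset.univ : Finset (Fin n)))
        (p := fun t : Fin n => lastF n + t ∈ dSet n π)
      rw [card_filter_cyclic n π] at h6
      simp only [Finset.card_univ, Fintype.card_fin] at h6
      omega
    rw [hcard2, nsmul_eq_mul, nsmul_eq_mul, ← hc]
    have hC0 : (0:ℝ) ≤ cutRiffle k n π := cutRiffle_nonneg k n π
    have hcR : ((n - c : ℕ) : ℝ) = (n:ℝ) - c := by push_cast [hcn]; ring
    rw [hcR]
    have hq : (c:ℝ) * ((n:ℝ) - c) + ((n:ℝ) - c) * c ≤ (n:ℝ)^2/2 := by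
      have hcnR : (c:ℝ) ≤ (n:ℝ) := by exact_mod_cast hcn
      have hc0 : (0:ℝ) ≤ (c:ℝ) := by positivity
      nlinarith [sq_nonneg ((n:ℝ) - 2*c)]
    calc (c:ℝ) * (cutRiffle k n π * ((n:ℝ) - c)) + ((n:ℝ) - c) * (cutRiffle k n π * c)
        = ((c:ℝ) * ((n:ℝ) - c) + ((n:ℝ) - c) * c) * cutRiffle k n π := by ring
      _ ≤ ((n:ℝ)^2/2) * cutRiffle k n π := by
          apply mul_le_mul_of_nonneg_right hq hC0
  -- Step C : reindexing
  have reindex : ∀ (f : Equiv.Perm (Fin n) → ℝ) (t : Fin n),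
      ∑ π : Equiv.Perm (Fin n), f (π * Equiv.addRight t)
        = ∑ π : Equiv.Perm (Fin n), f π := by
    intro f t
    exact Fintype.sum_equiv (Equiv.mulRight (Equiv.addRight t)) _ _ (fun π => rfl)
  have stepC : (n:ℝ) * ∑ π : Equiv.Perm (Fin n), Cw π
      ≤ ((n:ℝ)^2/2) * ∑ π : Equiv.Perm (Fin n), cutRiffle k n π := by
    have h1 : (n:ℝ) * ∑ π : Equiv.Perm (Fin n), Cw π
        = ∑ π : Equiv.Perm (Fin n), ∑ t : Fin n, Cw (π * Equiv.addRight t) := by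
      rw [Finset.sum_comm]
      rw [Finset.sum_congr rfl (fun t _ => reindex Cw t), Finset.sum_const,
        Finset.card_univ, Fintype.card_fin, nsmul_eq_mul]
    rw [h1, Finset.mul_sum]
    exact Finset.sum_le_sum (fun π _ => stepB π)
  -- Step D
  have stepD : ∑ π : Equiv.Perm (Fin n), cutRiffle k n π
      = ∑ π : Equiv.Perm (Fin n), riffle k n π := by
    have h1 : (n:ℝ) * ∑ π : Equiv.Perm (Fin n), cutRiffle k n π
        = (n:ℝ) * ∑ π : Equiv.Perm (Fin n), riffle k n π := by
      calc (n:ℝ) * ∑ π : Equiv.Perm (Fin n), cutRiffle k n π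
          = ∑ π : Equiv.Perm (Fin n), (n:ℝ) * cutRiffle k n π := by rw [Finset.mul_sum]
        _ = ∑ π : Equiv.Perm (Fin n), ∑ t : Fin n, riffle k n (π * Equiv.addRight t) := by
            exact Finset.sum_congr rfl (fun π _ => (orbit_riffle_sum n k hn hk π).symm)
        _ = ∑ t : Fin n, ∑ π : Equiv.Perm (Fin n), riffle k n (π * Equiv.addRight t) := by
            rw [Finset.sum_comm]
        _ = ∑ t : Fin n, ∑ π : Equiv.Perm (Fin n), riffle k n π := by
            exact Finset.sum_congr rfl (fun t _ => reindex (riffle k n) t)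
        _ = (n:ℝ) * ∑ π : Equiv.Perm (Fin n), riffle k n π := by
            rw [Finset.sum_const, Finset.card_univ, Fintype.card_fin, nsmul_eq_mul]
    exact mul_left_cancel₀ (ne_of_gt hnR) h1
  -- Step E
  have stepE : ∑ π : Equiv.Perm (Fin n), riffle k n π ≤ 1 := by
    unfold riffle
    rw [← Finset.sum_div]
    rw [div_le_one (by positivity)]
    have h2 : ((∑ π : Equiv.Perm (Fin n), Nat.choose (n + k - numDescents n π - 1) n : ℕ) : ℝ)
        ≤ ((k ^ n : ℕ) : ℝ) := by
      exact_mod_cast worpitzky_le n k hn hk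
    push_cast at h2
    exact h2
  -- assemble
  have hCwsum : ∑ π : Equiv.Perm (Fin n), Cw π ≤ (n:ℝ)/2 := by
    have h3 : (n:ℝ) * ∑ π : Equiv.Perm (Fin n), Cw π ≤ ((n:ℝ)^2/2) * 1 := by
      calc (n:ℝ) * ∑ π : Equiv.Perm (Fin n), Cw π
          ≤ ((n:ℝ)^2/2) * ∑ π : Equiv.Perm (Fin n), cutRiffle k n π := stepC
        _ = ((n:ℝ)^2/2) * ∑ π : Equiv.Perm (Fin n), riffle k n π := by rw [stepD]
        _ ≤ ((n:ℝ)^2/2) * 1 := by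
            apply mul_le_mul_of_nonneg_left stepE (by positivity)
    have h4 : (n:ℝ) * ∑ π : Equiv.Perm (Fin n), Cw π ≤ (n:ℝ) * ((n:ℝ)/2) := by
      calc (n:ℝ) * ∑ π : Equiv.Perm (Fin n), Cw π ≤ ((n:ℝ)^2/2) * 1 := h3
        _ = (n:ℝ) * ((n:ℝ)/2) := by ring
    exact le_of_mul_le_mul_left h4 hnR
  rw [stepA]
  have hrw : (n : ℝ) / (4 * (k:ℝ)) = (1/2) * (((n:ℝ)/2) / k) := by
    ring
  rw [hrw]
  gcongr
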